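/- Let m ≥ 1 and let J ⊆ A be the ideal generated by ε·τ^m·x − h·𝐟_(m−1), 𝐟_m, h·x, and h^(2m) − (−1)^m·τ^(m+1)·x² (the ideal J_n for n = 2m). Then an element a of the quotient ring A/J is an additive torsion element (i.e. k·a = 0 for some integer k ≥ 1) if and only if a lies in the ideal of A/J generated by the class of ε. (Proposition 4.6(iii), case n = 2m.) -/

import Mathlib

set_option maxHeartbeats 1000000
set_option synthInstance.maxHeartbeats 200000

/- Context: `A = ℤ[ε,τ,σ,h,x]/(2ε, τσ-1)` models `𝒜[h,x]` where
`𝒜 = ℤ[ε,τ,τ⁻¹]/(2ε)`, and for `m ≥ 0`,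
`𝐟_m = ∑_{a+2b=m} C(a+b,b)·ε^(2a+1)·τ^b·h^(2b) ∈ A`. -/

noncomputable section
open MvPolynomial

abbrev Apre : Type := MvPolynomial (Fin 5) ℤ  -- ε, τ, σ, h, x

def AI : Ideal Apre := Ideal.span {2 * X 0, X 1 * X 2 - 1}

abbrev A : Type := Apre ⧸ AI

def ε : A := Ideal.Quotient.mk AI (X 0)
def τ : A := Ideal.Quotient.mk AI (X 1)
def σ : A := Ideal.Quotient.mk AI (X 2)
def h : A := Ideal.Quotient.mk AI (X 3)
def x : A := Ideal.Quotient.mk AI (X 4)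

def f (m : ℕ) : A :=
  ∑ b ∈ Finset.range (m / 2 + 1),
    (Nat.choose (m - b) b : A) * ε ^ (2 * (m - 2 * b) + 1) * τ ^ b * h ^ (2 * b)

def J (m : ℕ) : Ideal A :=
  Ideal.span {ε * τ ^ m * x - h * f (m - 1), f m, h * x,
    h ^ (2 * m) - (-1 : A) ^ m * τ ^ (m + 1) * x ^ 2}

namespace TorsionAux

abbrev L : Type := ℤ →₀ ℤ
abbrev W : Type := ℕ → L

def δ (j : ℕ) (l : L) : W := fun i => if i = j then l else 0

lemma δ_smul (z : ℤ) (j : ℕ) (l : L) : z • δ j l = δ j (z • l) := by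
  funext i; simp only [Pi.smul_apply, δ]; split <;> simp

lemma δ_add (j : ℕ) (l l' : L) : δ j (l + l') = δ j l + δ j l' := by
  funext i; simp [δ]; split <;> simp

def w (m : ℕ) (s : Fin 5 →₀ ℕ) : W :=
  if s 0 ≠ 0 then 0
  else if s 4 = 0 then
    (if s 3 ≤ 2*m then δ (s 3) (Finsupp.single ((s 1 : ℤ) - (s 2 : ℤ)) 1) else 0)
  else if s 4 = 1 ∧ s 3 = 0 then δ (2*m+1) (Finsupp.single ((s 1 : ℤ) - (s 2 : ℤ)) 1)
  else if s 4 = 2 ∧ s 3 = 0 then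
    δ (2*m) (Finsupp.single ((s 1 : ℤ) - (s 2 : ℤ) - (m+1)) ((-1:ℤ)^m))
  else 0

def F (m : ℕ) : Apre →+ W := (Finsupp.liftAddHom (fun s => zmultiplesHom W (w m s))).comp
  AddMonoidAlgebra.coeffAddEquiv.toAddMonoidHom

lemma F_monomial (m : ℕ) (s : Fin 5 →₀ ℕ) (z : ℤ) : F m (monomial s z) = z • w m s := by
  rw [F, AddMonoidHom.comp_apply]; exact Finsupp.liftAddHom_apply_single _ s z

def monX (n : ℤ) : Apre := if 0 ≤ n then X 1 ^ n.toNat else X 2 ^ (-n).toNat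

def ι : L →+ Apre := Finsupp.liftAddHom (fun n => zmultiplesHom Apre (monX n))

lemma ι_single (n z : ℤ) : ι (Finsupp.single n z) = z • monX n :=
  Finsupp.liftAddHom_apply_single _ n z

def π (m : ℕ) : Apre →+* A ⧸ J m := (Ideal.Quotient.mk (J m)).comp (Ideal.Quotient.mk AI)

lemma π_surj (m : ℕ) : Function.Surjective (π m) :=
  (Ideal.Quotient.mk_surjective).comp (Ideal.Quotient.mk_surjective)

def fpre (k : ℕ) : Apre :=
  ∑ b ∈ Finset.range (k / 2 + 1),
    (Nat.choose (k - b) b : Apre) * X 0 ^ (2 * (k - 2 * b) + 1) * X 1 ^ b * X 3 ^ (2 * b)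

def gens (m : ℕ) : Set Apre :=
  {X 0 * X 1 ^ m * X 4 - X 3 * fpre (m - 1), fpre m, X 3 * X 4,
    X 3 ^ (2 * m) - (-1 : Apre) ^ m * X 1 ^ (m + 1) * X 4 ^ 2}

lemma mkA_fpre (k : ℕ) : Ideal.Quotient.mk AI (fpre k) = f k := by
  simp only [fpre, f, map_sum, map_mul, map_pow, map_natCast]
  rfl

lemma J_eq (m : ℕ) : J m = Ideal.map (Ideal.Quotient.mk AI) (Ideal.span (gens m)) := by
  rw [Ideal.map_span, gens, J]
  congr 1
  rw [Set.image_insert_eq, Set.image_insert_eq, Set.image_insert_eq, Set.image_singleton]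
  simp only [map_sub, map_mul, map_pow, mkA_fpre, map_one, map_neg]
  rfl

lemma ker_π (m : ℕ) :
    RingHom.ker (π m) = Ideal.span (gens m) ⊔ AI := by
  have h1 : RingHom.ker (π m) = Ideal.comap (Ideal.Quotient.mk AI) (J m) := by
    ext p
    rw [RingHom.mem_ker, Ideal.mem_comap, π, RingHom.comp_apply,
      ← Ideal.Quotient.eq_zero_iff_mem]
  rw [h1, J_eq, Ideal.comap_map_of_surjective _ Ideal.Quotient.mk_surjective,
    ← RingHom.ker_eq_comap_bot, Ideal.mk_ker]


def e (i : Fin 5) (k : ℕ) : Fin 5 →₀ ℕ := Finsupp.single i k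

lemma e_apply (i : Fin 5) (k : ℕ) (j : Fin 5) : e i k j = if i = j then k else 0 :=
  Finsupp.single_apply

lemma app_add (s t : Fin 5 →₀ ℕ) (i : Fin 5) : (s + t) i = s i + t i := rfl

lemma W0 (m : ℕ) (s : Fin 5 →₀ ℕ) (hs : s 0 ≠ 0) : w m s = 0 := by
  simp [w, hs]

lemma W1 (m : ℕ) (s : Fin 5 →₀ ℕ) : w m (s + e 1 1 + e 2 1) = w m s := by
  have h0 : (s + e 1 1 + e 2 1) 0 = s 0 := by simp [app_add, e_apply]
  have h1 : (s + e 1 1 + e 2 1) 1 = s 1 + 1 := by simp [app_add, e_apply]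
  have h2 : (s + e 1 1 + e 2 1) 2 = s 2 + 1 := by simp [app_add, e_apply]
  have h3 : (s + e 1 1 + e 2 1) 3 = s 3 := by simp [app_add, e_apply]
  have h4 : (s + e 1 1 + e 2 1) 4 = s 4 := by simp [app_add, e_apply]
  have hc : ((s 1 + 1 : ℕ) : ℤ) - ((s 2 + 1 : ℕ) : ℤ) = (s 1 : ℤ) - s 2 := by push_cast; ring
  simp only [w, h0, h1, h2, h3, h4, hc]

lemma W2 (m : ℕ) (s : Fin 5 →₀ ℕ) : w m (s + e 3 1 + e 4 1) = 0 := by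
  have h3 : (s + e 3 1 + e 4 1) 3 = s 3 + 1 := by simp [app_add, e_apply]
  have h4 : (s + e 3 1 + e 4 1) 4 = s 4 + 1 := by simp [app_add, e_apply]
  have c1 : ¬ (s 4 + 1 = 0) := by omega
  have c2 : ¬ (s 4 + 1 = 1 ∧ s 3 + 1 = 0) := by omega
  have c3 : ¬ (s 4 + 1 = 2 ∧ s 3 + 1 = 0) := by omega
  simp only [w, h3, h4, c1, c2, c3, if_false, ite_false]
  split_ifs <;> rfl

lemma W3 (m : ℕ) (hm : 1 ≤ m) (s : Fin 5 →₀ ℕ) :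
    w m (s + e 3 (2*m)) = ((-1:ℤ)^m) • w m (s + e 1 (m+1) + e 4 2) := by
  have l0 : (s + e 3 (2*m)) 0 = s 0 := by simp [app_add, e_apply]
  have l1 : (s + e 3 (2*m)) 1 = s 1 := by simp [app_add, e_apply]
  have l2 : (s + e 3 (2*m)) 2 = s 2 := by simp [app_add, e_apply]
  have l3 : (s + e 3 (2*m)) 3 = s 3 + 2*m := by simp [app_add, e_apply]
  have l4 : (s + e 3 (2*m)) 4 = s 4 := by simp [app_add, e_apply]
  have r0 : (s + e 1 (m+1) + e 4 2) 0 = s 0 := by simp [app_add, e_apply]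
  have r1 : (s + e 1 (m+1) + e 4 2) 1 = s 1 + (m+1) := by simp [app_add, e_apply]
  have r2 : (s + e 1 (m+1) + e 4 2) 2 = s 2 := by simp [app_add, e_apply]
  have r3 : (s + e 1 (m+1) + e 4 2) 3 = s 3 := by simp [app_add, e_apply]
  have r4 : (s + e 1 (m+1) + e 4 2) 4 = s 4 + 2 := by simp [app_add, e_apply]
  have hsq : (-1:ℤ)^m * (-1:ℤ)^m = 1 := by
    rw [← pow_add]; exact Even.neg_one_pow ⟨m, rfl⟩
  simp only [w, l0, l1, l2, l3, l4, r0, r1, r2, r3, r4]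
  by_cases hs0 : s 0 = 0
  · by_cases he : s 4 = 0
    · by_cases hd : s 3 = 0
      · have c1 : s 3 + 2*m ≤ 2*m := by omega
        have c2 : ¬ (s 4 + 2 = 0) := by omega
        have c3 : ¬ (s 4 + 2 = 1 ∧ s 3 = 0) := by omega
        have c4 : s 4 + 2 = 2 ∧ s 3 = 0 := by omega
        simp only [hs0, ne_eq, not_true_eq_false, if_false, he, if_true, c1, c2, c3, c4,
          if_true, ite_false, ite_true]
        norm_num
        have harg : ((s 1 : ℤ) + (m + 1) - s 2 - (m + 1)) = (s 1 : ℤ) - s 2 := by ring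
        have hsqL : ((-1 : LaurentPolynomial ℤ))^m * (-1 : LaurentPolynomial ℤ)^m = 1 := by
          rw [← pow_add]; exact Even.neg_one_pow ⟨m, rfl⟩
        have key : ((-1:ℤ)^m) • ((-1 : LaurentPolynomial ℤ)^m
            * LaurentPolynomial.T ((s 1:ℤ) - s 2)) = LaurentPolynomial.T ((s 1:ℤ) - s 2) := by
          rw [zsmul_eq_mul]
          push_cast
          rw [← mul_assoc, hsqL, one_mul]
        rw [δ_smul, harg, Finsupp.smul_single, smul_eq_mul, hsq]
      · have c1 : ¬ (s 3 + 2*m ≤ 2*m) := by omega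
        have c2 : ¬ (s 4 + 2 = 0) := by omega
        have c3 : ¬ (s 4 + 2 = 1 ∧ s 3 = 0) := by omega
        have c4 : ¬ (s 4 + 2 = 2 ∧ s 3 = 0) := by omega
        simp only [hs0, ne_eq, not_true_eq_false, if_false, he, if_true, c1, c2, c3, c4,
          ite_false, ite_true]
        simp [hd]
    · have c2 : ¬ (s 4 + 2 = 0) := by omega
      have c3 : ¬ (s 4 + 2 = 1 ∧ s 3 = 0) := by omega
      have c4 : ¬ (s 4 + 2 = 2 ∧ s 3 = 0) := by omega
      have c5 : ¬ (s 4 = 1 ∧ s 3 + 2*m = 0) := by omega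
      have c6 : ¬ (s 4 = 2 ∧ s 3 + 2*m = 0) := by omega
      simp only [hs0, ne_eq, not_true_eq_false, if_false, he, c2, c3, c4, c5, c6,
        ite_false, if_false]
      simp
  · simp [hs0]


lemma X_mon (i : Fin 5) : (X i : Apre) = monomial (e i 1) 1 := by
  rw [← pow_one (X i : Apre), X_pow_eq_monomial]; rfl

lemma X_pow_mon (i : Fin 5) (k : ℕ) : (X i : Apre) ^ k = monomial (e i k) 1 :=
  X_pow_eq_monomial

lemma FX0 (m : ℕ) (r : Apre) : F m (r * X 0) = 0 := by
  induction r using MvPolynomial.induction_on' with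
  | monomial s z =>
    rw [X_mon, monomial_mul, F_monomial, W0]
    · simp
    · have : (s + e 0 1) 0 = s 0 + 1 := by simp [app_add, e_apply]
      omega
  | add p q hp hq => rw [add_mul, map_add, hp, hq, add_zero]

def gpre (k : ℕ) : Apre :=
  ∑ b ∈ Finset.range (k / 2 + 1),
    (Nat.choose (k - b) b : Apre) * X 0 ^ (2 * (k - 2 * b)) * X 1 ^ b * X 3 ^ (2 * b)

lemma fpre_factor (k : ℕ) : fpre k = gpre k * X 0 := by
  rw [fpre, gpre, Finset.sum_mul]
  refine Finset.sum_congr rfl fun b _ => ?_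
  rw [pow_succ]
  ring

lemma Fg1 (m : ℕ) (r : Apre) : F m (r * (X 1 * X 2 - 1)) = 0 := by
  induction r using MvPolynomial.induction_on' with
  | monomial s z =>
    have hX : (X 1 * X 2 : Apre) = monomial (e 1 1 + e 2 1) 1 := by
      rw [X_mon, X_mon, monomial_mul, mul_one]
    rw [mul_sub, mul_one, hX, monomial_mul, mul_one, map_sub, F_monomial, F_monomial,
      ← add_assoc, W1, sub_self]
  | add p q hp hq => rw [add_mul, map_add, hp, hq, add_zero]

lemma Fg3 (m : ℕ) (r : Apre) : F m (r * (X 3 * X 4)) = 0 := by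
  induction r using MvPolynomial.induction_on' with
  | monomial s z =>
    have hX : (X 3 * X 4 : Apre) = monomial (e 3 1 + e 4 1) 1 := by
      rw [X_mon, X_mon, monomial_mul, mul_one]
    rw [hX, monomial_mul, mul_one, F_monomial, ← add_assoc, W2, smul_zero]
  | add p q hp hq => rw [add_mul, map_add, hp, hq, add_zero]

lemma Fg4 (m : ℕ) (hm : 1 ≤ m) (r : Apre) :
    F m (r * (X 3 ^ (2*m) - (-1 : Apre) ^ m * X 1 ^ (m+1) * X 4 ^ 2)) = 0 := by
  induction r using MvPolynomial.induction_on' with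
  | monomial s z =>
    have hC : ((-1 : Apre)) ^ m = monomial 0 ((-1 : ℤ)^m) := by
      rw [← C_1, ← C_neg, ← C_pow, C_apply]
    have hX : ((-1 : Apre)) ^ m * X 1 ^ (m+1) * X 4 ^ 2
        = monomial (e 1 (m+1) + e 4 2) ((-1 : ℤ)^m) := by
      rw [hC, X_pow_mon, X_pow_mon, monomial_mul, monomial_mul, mul_one, mul_one, zero_add]
    rw [mul_sub, hX, X_pow_mon, monomial_mul, monomial_mul, mul_one, map_sub,
      F_monomial, F_monomial, W3 m hm, smul_smul, ← add_assoc, sub_self]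
  | add p q hp hq => rw [add_mul, map_add, hp, hq, add_zero]

lemma F_ker (m : ℕ) (hm : 1 ≤ m) (p : Apre) (hp : π m p = 0) : F m p = 0 := by
  have hmem : p ∈ RingHom.ker (π m) := hp
  rw [ker_π, AI, ← Ideal.span_union] at hmem
  have key : ∀ q ∈ Ideal.span (gens m ∪ {2 * X 0, X 1 * X 2 - 1}),
      ∀ r : Apre, F m (r * q) = 0 := by
    intro q hq
    refine Submodule.span_induction ?_ ?_ ?_ ?_ hq
    · intro g hg r
      rcases hg with hg | hg
      · rcases hg with hg | hg | hg | hg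
        · -- l1
          subst hg
          have : r * (X 0 * X 1 ^ m * X 4 - X 3 * fpre (m-1))
              = (r * (X 1 ^ m * X 4 - X 3 * gpre (m-1))) * X 0 := by
            rw [fpre_factor]; ring
          rw [this, FX0]
        · subst hg
          rw [fpre_factor, show r * (gpre m * X 0) = (r * gpre m) * X 0 by ring, FX0]
        · subst hg; exact Fg3 m r
        · rw [Set.mem_singleton_iff] at hg
          subst hg; exact Fg4 m hm r
      · rcases hg with hg | hg
        · subst hg
          rw [show r * (2 * X 0) = (2 * r) * X 0 by ring, FX0]
        · rw [Set.mem_singleton_iff] at hg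
          subst hg; exact Fg1 m r
    · intro r; rw [mul_zero, map_zero]
    · intro a b _ _ ha hb r; rw [mul_add, map_add, ha, hb, add_zero]
    · intro a b _ hb r
      rw [smul_eq_mul, show r * (a * b) = (r * a) * b by ring]
      exact hb (r * a)
  have := key p hmem 1
  rwa [one_mul] at this


lemma π_gen (m : ℕ) {g : Apre} (hg : g ∈ gens m) : π m g = 0 := by
  have : g ∈ RingHom.ker (π m) := by
    rw [ker_π]
    exact Ideal.mem_sup_left (Ideal.subset_span hg)
  exact this

lemma π_AI (m : ℕ) {g : Apre} (hg : g ∈ ({2 * X 0, X 1 * X 2 - 1} : Set Apre)) :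
    π m g = 0 := by
  have : g ∈ RingHom.ker (π m) := by
    rw [ker_π]
    exact Ideal.mem_sup_right (Ideal.subset_span hg)
  exact this

lemma tau_sigma (m : ℕ) : π m (X 1) * π m (X 2) = 1 := by
  have := π_AI m (g := X 1 * X 2 - 1) (Set.mem_insert_of_mem _ rfl)
  rw [map_sub, map_mul, map_one, sub_eq_zero] at this
  exact this

def u (m : ℕ) : (A ⧸ J m)ˣ where
  val := π m (X 1)
  inv := π m (X 2)
  val_inv := tau_sigma m
  inv_val := by rw [mul_comm (G := A ⧸ J m)]; exact tau_sigma m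

lemma monX_zero : monX 0 = 1 := by simp [monX]
lemma monX_one : monX 1 = X 1 := by simp [monX]
lemma monX_negone : monX (-1) = X 2 := by simp [monX]

lemma πu_pow (m : ℕ) (n : ℤ) : π m (monX n) = ((u m ^ n : (A ⧸ J m)ˣ) : A ⧸ J m) := by
  rcases n with k | k
  · have h0 : (0:ℤ) ≤ Int.ofNat k := Int.ofNat_nonneg k
    rw [monX, if_pos h0]
    rw [show (Int.ofNat k) = (k : ℤ) from rfl, zpow_natCast, Units.val_pow_eq_pow_val]
    rw [map_pow]
    rfl
  · have h0 : ¬ (0:ℤ) ≤ Int.negSucc k := not_le.mpr (Int.negSucc_lt_zero k)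
    rw [monX, if_neg h0]
    have h1 : ((-(Int.negSucc k)).toNat) = k + 1 := rfl
    rw [h1, zpow_negSucc, ← inv_pow]
    have h2 : (((u m)⁻¹ : (A ⧸ J m)ˣ) : A ⧸ J m) = π m (X 2) := rfl
    rw [Units.val_pow_eq_pow_val, h2, map_pow]
  
def sh (k : ℤ) : L →+ L := Finsupp.mapDomain.addMonoidHom (fun n => n + k)

lemma sh_single (k n z : ℤ) : sh k (Finsupp.single n z) = Finsupp.single (n + k) z := by
  rw [sh, Finsupp.mapDomain.addMonoidHom_apply, Finsupp.mapDomain_single]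

lemma π_ι_sh (m : ℕ) (k : ℤ) (l : L) :
    π m (ι (sh k l)) = π m (monX k) * π m (ι l) := by
  induction l using Finsupp.induction_linear with
  | zero => rw [map_zero, map_zero, map_zero, mul_zero (M₀ := A ⧸ J m)]
  | add a b ha hb => simp only [map_add, mul_add, ha, hb]
  | single n z =>
    rw [sh_single, ι_single, ι_single, map_zsmul, map_zsmul, πu_pow, πu_pow, πu_pow,
      zpow_add, Units.val_mul, mul_smul_comm, mul_comm ((u m ^ n : (A ⧸ J m)ˣ) : A ⧸ J m)]


lemma hx_rel (m : ℕ) : π m (X 3) * π m (X 4) = 0 := by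
  have := π_gen m (g := X 3 * X 4) (by right; right; left; rfl)
  rwa [map_mul] at this

lemma hpow_rel (m : ℕ) :
    π m (X 3) ^ (2*m) = (-1 : A ⧸ J m)^m * π m (X 1)^(m+1) * π m (X 4)^2 := by
  have := π_gen m (g := X 3 ^ (2*m) - (-1 : Apre) ^ m * X 1 ^ (m+1) * X 4 ^ 2)
    (by right; right; right; rfl)
  rw [map_sub, map_mul, map_mul, map_pow, map_pow, map_pow, map_neg, map_one,
    sub_eq_zero] at this
  exact this

lemma h_top_zero (m : ℕ) : π m (X 3) ^ (2*m+1) = 0 := by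
  rw [pow_succ, hpow_rel]
  calc (-1 : A ⧸ J m)^m * π m (X 1)^(m+1) * π m (X 4)^2 * π m (X 3)
      = (-1 : A ⧸ J m)^m * π m (X 1)^(m+1) * π m (X 4) * (π m (X 3) * π m (X 4)) := by ring
    _ = 0 := by rw [hx_rel, mul_zero (M₀ := A ⧸ J m)]

lemma x_sq_rel (m : ℕ) :
    π m (X 4)^2
      = ((-1 : A ⧸ J m)^m) * ((u m ^ (-(m+1:ℤ)) : (A ⧸ J m)ˣ) : A ⧸ J m)
          * π m (X 3)^(2*m) := by
  have h1 : ((u m ^ (-(m+1:ℤ)) : (A ⧸ J m)ˣ) : A ⧸ J m)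
      * π m (X 1)^(m+1) = 1 := by
    have : π m (X 1)^(m+1) = ((u m ^ ((m+1:ℕ):ℤ) : (A ⧸ J m)ˣ) : A ⧸ J m) := by
      rw [zpow_natCast, Units.val_pow_eq_pow_val]; rfl
    rw [this, ← Units.val_mul, ← zpow_add]
    have he : (-(m+1:ℤ)) + ((m+1:ℕ):ℤ) = 0 := by push_cast; ring
    rw [he, zpow_zero, Units.val_one]
  have h2 : ((-1 : A ⧸ J m)^m) * (-1 : A ⧸ J m)^m = 1 := by
    rw [← mul_pow (M := A ⧸ J m), show (-1 : A ⧸ J m) * (-1) = 1 by ring, one_pow (M := A ⧸ J m)]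
  calc π m (X 4)^2
      = (((-1 : A ⧸ J m)^m) * (-1 : A ⧸ J m)^m)
        * ((((u m ^ (-(m+1:ℤ)) : (A ⧸ J m)ˣ) : A ⧸ J m)) * π m (X 1)^(m+1))
        * π m (X 4)^2 := by rw [h1, h2]; ring
    _ = ((-1 : A ⧸ J m)^m) * ((u m ^ (-(m+1:ℤ)) : (A ⧸ J m)ˣ) : A ⧸ J m)
          * ((-1 : A ⧸ J m)^m * π m (X 1)^(m+1) * π m (X 4)^2) := by ring
    _ = ((-1 : A ⧸ J m)^m) * ((u m ^ (-(m+1:ℤ)) : (A ⧸ J m)ˣ) : A ⧸ J m)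
          * π m (X 3)^(2*m) := by rw [← hpow_rel]

def rep (m : ℕ) (c : ℕ → L) (d : L) : Apre :=
  (∑ j ∈ Finset.range (2*m+1), ι (c j) * X 3 ^ j) + ι d * X 4

lemma π_rep (m : ℕ) (c : ℕ → L) (d : L) :
    π m (rep m c d)
      = (∑ j ∈ Finset.range (2*m+1), π m (ι (c j)) * π m (X 3) ^ j)
        + π m (ι d) * π m (X 4) := by
  simp only [rep, map_add, map_sum, map_mul, map_pow]

lemma spanning (m : ℕ) (hm : 1 ≤ m) (p : Apre) :
    ∃ (q : A ⧸ J m) (c : ℕ → L) (d : L),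
      π m p = π m (X 0) * q + π m (rep m c d) := by
  induction p using MvPolynomial.induction_on with
  | C a =>
    refine ⟨0, fun j => if j = 0 then Finsupp.single 0 a else 0, 0, ?_⟩
    rw [mul_zero (M₀ := A ⧸ J m), zero_add, π_rep]
    simp only [map_zero]
    rw [zero_mul (M₀ := A ⧸ J m), add_zero, Finset.sum_eq_single 0]
    · rw [if_pos rfl, ι_single, monX_zero, pow_zero, mul_one (M := A ⧸ J m), map_zsmul, map_one]
      have : π m (C a) = π m ((a : Apre)) := by norm_cast
      rw [this, map_intCast]
      exact (zsmul_eq_mul (α := A ⧸ J m) _ _).trans (mul_one (M := A ⧸ J m) _) |>.symm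
    · intro j _ hj
      rw [if_neg hj, map_zero, map_zero, zero_mul (M₀ := A ⧸ J m)]
    · intro hmem
      exact absurd (Finset.mem_range.mpr (by omega)) hmem
  | add p q hp hq =>
    obtain ⟨q1, c1, d1, h1⟩ := hp
    obtain ⟨q2, c2, d2, h2⟩ := hq
    refine ⟨q1 + q2, fun j => c1 j + c2 j, d1 + d2, ?_⟩
    have : rep m (fun j => c1 j + c2 j) (d1 + d2) = rep m c1 d1 + rep m c2 d2 := by
      simp only [rep, map_add, add_mul]
      rw [Finset.sum_add_distrib]
      ring
    rw [map_add, h1, h2, this, map_add]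
    ring
  | mul_X p i hp =>
    obtain ⟨q, c, d, hpr⟩ := hp
    have base : ∀ i : Fin 5,
        π m (p * X i) = (π m (X 0) * q + π m (rep m c d)) * π m (X i) := by
      intro i; rw [map_mul, hpr]
    fin_cases i
    · -- i = 0
      show ∃ (q' : A ⧸ J m) (c' : ℕ → L) (d' : L),
        π m (p * X 0) = π m (X 0) * q' + π m (rep m c' d')
      refine ⟨π m p, 0, 0, ?_⟩
      have : rep m 0 0 = 0 := by
        simp [rep]
      rw [this, map_zero, add_zero, map_mul, mul_comm (G := A ⧸ J m)]
    · -- i = 1 :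
      show ∃ (q' : A ⧸ J m) (c' : ℕ → L) (d' : L),
        π m (p * X 1) = π m (X 0) * q' + π m (rep m c' d')
      -- τ
      refine ⟨q * π m (X 1), fun j => sh 1 (c j), sh 1 d, ?_⟩
      rw [base _, add_mul, π_rep, π_rep, add_mul, Finset.sum_mul (R := A ⧸ J m)]
      congr 1
      · ring
      congr 1
      · refine Finset.sum_congr rfl fun j _ => ?_
        rw [π_ι_sh, monX_one]
        ring
      · rw [π_ι_sh, monX_one]
        ring
    · -- i = 2 :
      show ∃ (q' : A ⧸ J m) (c' : ℕ → L) (d' : L),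
        π m (p * X 2) = π m (X 0) * q' + π m (rep m c' d')
      -- σ
      refine ⟨q * π m (X 2), fun j => sh (-1) (c j), sh (-1) d, ?_⟩
      rw [base _, add_mul, π_rep, π_rep, add_mul, Finset.sum_mul (R := A ⧸ J m)]
      congr 1
      · ring
      congr 1
      · refine Finset.sum_congr rfl fun j _ => ?_
        rw [π_ι_sh, monX_negone]
        ring
      · rw [π_ι_sh, monX_negone]
        ring
    · -- i = 3 :
      show ∃ (q' : A ⧸ J m) (c' : ℕ → L) (d' : L),
        π m (p * X 3) = π m (X 0) * q' + π m (rep m c' d')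
      -- h
      refine ⟨q * π m (X 3), fun j => if j = 0 then 0 else c (j - 1), 0, ?_⟩
      rw [base _, add_mul, π_rep, π_rep, add_mul, Finset.sum_mul (R := A ⧸ J m)]
      have hL : (∑ j ∈ Finset.range (2*m+1), π m (ι (c j)) * π m (X 3) ^ j * π m (X 3))
          = ∑ j ∈ Finset.range (2*m), π m (ι (c j)) * π m (X 3) ^ (j+1) := by
        rw [Finset.sum_range_succ]
        have : π m (ι (c (2*m))) * π m (X 3) ^ (2*m) * π m (X 3) = 0 := by
          rw [mul_assoc, ← pow_succ, h_top_zero, mul_zero (M₀ := A ⧸ J m)]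
        rw [this, add_zero]
        refine Finset.sum_congr rfl fun j _ => ?_
        rw [mul_assoc, ← pow_succ]
      have hR : (∑ j ∈ Finset.range (2*m+1),
            π m (ι (if j = 0 then 0 else c (j - 1))) * π m (X 3) ^ j)
          = ∑ j ∈ Finset.range (2*m), π m (ι (c j)) * π m (X 3) ^ (j+1) := by
        rw [Finset.sum_range_succ']
        simp only [map_zero, zero_mul (M₀ := A ⧸ J m), add_zero, pow_zero, if_true, eq_self_iff_true,
          Nat.succ_ne_zero, if_false, Nat.add_sub_cancel, ite_true, ite_false, mul_one (M := A ⧸ J m)]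
      rw [hL, hR]
      simp only [map_zero, zero_mul (M₀ := A ⧸ J m), add_zero]
      have hx : π m (ι d) * π m (X 4) * π m (X 3) = 0 := by
        rw [mul_assoc, mul_comm (π m (X 4)), hx_rel, mul_zero (M₀ := A ⧸ J m)]
      rw [hx, add_zero]
      ring
    · -- i = 4 :
      show ∃ (q' : A ⧸ J m) (c' : ℕ → L) (d' : L),
        π m (p * X 4) = π m (X 0) * q' + π m (rep m c' d')
      -- x
      refine ⟨q * π m (X 4),
        fun j => if j = 2*m then ((-1:ℤ)^m) • sh (-(m+1:ℤ)) d else 0, c 0, ?_⟩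
      rw [base _, add_mul, π_rep, π_rep, add_mul, Finset.sum_mul (R := A ⧸ J m)]
      have hL : (∑ j ∈ Finset.range (2*m+1), π m (ι (c j)) * π m (X 3) ^ j * π m (X 4))
          = π m (ι (c 0)) * π m (X 4) := by
        rw [Finset.sum_range_succ']
        have : ∀ j ∈ Finset.range (2*m),
            π m (ι (c (j+1))) * π m (X 3) ^ (j+1) * π m (X 4) = 0 := by
          intro j _
          rw [pow_succ, show π m (ι (c (j+1))) * (π m (X 3)^j * π m (X 3)) * π m (X 4)
            = π m (ι (c (j+1))) * π m (X 3)^j * (π m (X 3) * π m (X 4)) by ring,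
            hx_rel, mul_zero (M₀ := A ⧸ J m)]
        rw [Finset.sum_congr rfl this, Finset.sum_const, smul_zero, zero_add, pow_zero]
        ring
      have hR : (∑ j ∈ Finset.range (2*m+1),
            π m (ι (if j = 2*m then ((-1:ℤ)^m) • sh (-(m+1:ℤ)) d else 0)) * π m (X 3) ^ j)
          = π m (ι d) * π m (X 4) * π m (X 4) := by
        rw [Finset.sum_eq_single (2*m)]
        · rw [if_pos rfl, map_zsmul, map_zsmul, π_ι_sh, πu_pow, zsmul_eq_mul (α := A ⧸ J m)]
          push_cast
          have : π m (ι d) * π m (X 4) * π m (X 4) = π m (ι d) * π m (X 4)^2 := by ring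
          rw [this, x_sq_rel]
          ring
        · intro j _ hj
          rw [if_neg hj, map_zero, map_zero, zero_mul (M₀ := A ⧸ J m)]
        · intro hmem
          exact absurd (Finset.mem_range.mpr (by omega)) hmem
      rw [hL, hR]
      ring


lemma δ_zero (j : ℕ) : δ j (0 : L) = 0 := by
  funext i; simp [δ]

lemma w_mon13 (m : ℕ) (a j : ℕ) (hj : j ≤ 2*m) :
    w m (e 1 a + e 3 j) = δ j (Finsupp.single (a : ℤ) 1) := by
  have h0 : (e 1 a + e 3 j) 0 = 0 := by simp [app_add, e_apply]
  have h1 : (e 1 a + e 3 j) 1 = a := by simp [app_add, e_apply]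
  have h2 : (e 1 a + e 3 j) 2 = 0 := by simp [app_add, e_apply]
  have h3 : (e 1 a + e 3 j) 3 = j := by simp [app_add, e_apply]
  have h4 : (e 1 a + e 3 j) 4 = 0 := by simp [app_add, e_apply]
  simp only [w, h0, h1, h2, h3, h4, ne_eq, not_true_eq_false, if_false, if_pos rfl,
    ite_true, ite_false, hj, Nat.cast_zero, sub_zero, not_false_eq_true]

lemma w_mon23 (m : ℕ) (a j : ℕ) (hj : j ≤ 2*m) :
    w m (e 2 a + e 3 j) = δ j (Finsupp.single (-(a : ℤ)) 1) := by
  have h0 : (e 2 a + e 3 j) 0 = 0 := by simp [app_add, e_apply]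
  have h1 : (e 2 a + e 3 j) 1 = 0 := by simp [app_add, e_apply]
  have h2 : (e 2 a + e 3 j) 2 = a := by simp [app_add, e_apply]
  have h3 : (e 2 a + e 3 j) 3 = j := by simp [app_add, e_apply]
  have h4 : (e 2 a + e 3 j) 4 = 0 := by simp [app_add, e_apply]
  simp only [w, h0, h1, h2, h3, h4, ne_eq, not_true_eq_false, if_false, if_pos rfl,
    ite_true, ite_false, hj, Nat.cast_zero, zero_sub, not_false_eq_true]

lemma w_mon14 (m : ℕ) (a : ℕ) :
    w m (e 1 a + e 4 1) = δ (2*m+1) (Finsupp.single (a : ℤ) 1) := by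
  have h0 : (e 1 a + e 4 1) 0 = 0 := by simp [app_add, e_apply]
  have h1 : (e 1 a + e 4 1) 1 = a := by simp [app_add, e_apply]
  have h2 : (e 1 a + e 4 1) 2 = 0 := by simp [app_add, e_apply]
  have h3 : (e 1 a + e 4 1) 3 = 0 := by simp [app_add, e_apply]
  have h4 : (e 1 a + e 4 1) 4 = 1 := by simp [app_add, e_apply]
  simp only [w, h0, h1, h2, h3, h4, ne_eq, not_true_eq_false, if_false,
    Nat.cast_zero, sub_zero, one_ne_zero, ite_false, and_true, ite_true,
    not_false_eq_true, and_self, if_pos]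

lemma w_mon24 (m : ℕ) (a : ℕ) :
    w m (e 2 a + e 4 1) = δ (2*m+1) (Finsupp.single (-(a : ℤ)) 1) := by
  have h0 : (e 2 a + e 4 1) 0 = 0 := by simp [app_add, e_apply]
  have h1 : (e 2 a + e 4 1) 1 = 0 := by simp [app_add, e_apply]
  have h2 : (e 2 a + e 4 1) 2 = a := by simp [app_add, e_apply]
  have h3 : (e 2 a + e 4 1) 3 = 0 := by simp [app_add, e_apply]
  have h4 : (e 2 a + e 4 1) 4 = 1 := by simp [app_add, e_apply]
  simp only [w, h0, h1, h2, h3, h4, ne_eq, not_true_eq_false, if_false,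
    Nat.cast_zero, zero_sub, one_ne_zero, ite_false, and_true, ite_true,
    not_false_eq_true, and_self, if_pos]

lemma monX_mul_mon (n : ℤ) (t : Fin 5 →₀ ℕ) :
    monX n * monomial t 1
      = if 0 ≤ n then monomial (e 1 n.toNat + t) 1 else monomial (e 2 (-n).toNat + t) 1 := by
  rcases le_or_gt 0 n with hn | hn
  · rw [monX, if_pos hn, if_pos hn, X_pow_mon, monomial_mul, one_mul]
  · rw [monX, if_neg (not_le.mpr hn), if_neg (not_le.mpr hn), X_pow_mon, monomial_mul, one_mul]

lemma F_ι_h (m : ℕ) (j : ℕ) (hj : j ≤ 2*m) (l : L) :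
    F m (ι l * X 3 ^ j) = δ j l := by
  induction l using Finsupp.induction_linear with
  | zero => rw [map_zero, zero_mul, map_zero, δ_zero]
  | add a b ha hb => rw [map_add, add_mul, map_add, ha, hb, δ_add]
  | single n z =>
    rw [ι_single, MvPolynomial.smul_eq_C_mul, mul_assoc, X_pow_mon, monX_mul_mon]
    rcases le_or_gt 0 n with hn | hn
    · rw [if_pos hn, MvPolynomial.C_mul_monomial, mul_one, F_monomial,
        w_mon13 m _ j hj, Int.toNat_of_nonneg hn]
      rw [δ_smul, Finsupp.smul_single, smul_eq_mul, mul_one]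
    · rw [if_neg (not_le.mpr hn), MvPolynomial.C_mul_monomial, mul_one, F_monomial,
        w_mon23 m _ j hj]
      have harg : (-(((-n).toNat : ℤ))) = n := by omega
      rw [harg]
      rw [δ_smul, Finsupp.smul_single, smul_eq_mul, mul_one]
  
lemma F_ι_x (m : ℕ) (l : L) : F m (ι l * X 4) = δ (2*m+1) l := by
  induction l using Finsupp.induction_linear with
  | zero => rw [map_zero, zero_mul, map_zero, δ_zero]
  | add a b ha hb => rw [map_add, add_mul, map_add, ha, hb, δ_add]
  | single n z =>
    rw [ι_single, MvPolynomial.smul_eq_C_mul, mul_assoc, X_mon, monX_mul_mon]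
    rcases le_or_gt 0 n with hn | hn
    · rw [if_pos hn, MvPolynomial.C_mul_monomial, mul_one, F_monomial,
        w_mon14, Int.toNat_of_nonneg hn]
      rw [δ_smul, Finsupp.smul_single, smul_eq_mul, mul_one]
    · rw [if_neg (not_le.mpr hn), MvPolynomial.C_mul_monomial, mul_one, F_monomial,
        w_mon24]
      have harg : (-(((-n).toNat : ℤ))) = n := by omega
      rw [harg]
      rw [δ_smul, Finsupp.smul_single, smul_eq_mul, mul_one]

lemma F_rep (m : ℕ) (c : ℕ → L) (d : L) :
    F m (rep m c d) = (∑ j ∈ Finset.range (2*m+1), δ j (c j)) + δ (2*m+1) d := by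
  rw [rep, map_add, map_sum, F_ι_x]
  congr 1
  refine Finset.sum_congr rfl fun j hj => ?_
  exact F_ι_h m j (by have := Finset.mem_range.mp hj; omega) (c j)

lemma F_rep_eval_lt (m : ℕ) (c : ℕ → L) (d : L) (i : ℕ) (hi : i < 2*m+1) :
    F m (rep m c d) i = c i := by
  rw [F_rep]
  have h1 : (∑ j ∈ Finset.range (2*m+1), δ j (c j)) i
      = ∑ j ∈ Finset.range (2*m+1), (if i = j then c j else 0) := by
    rw [Finset.sum_apply]; rfl
  have h2 : δ (2*m+1) d i = 0 := by
    rw [δ, if_neg (by omega)]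
  show (∑ j ∈ Finset.range (2*m+1), δ j (c j)) i + δ (2*m+1) d i = c i
  rw [h1, h2, add_zero, Finset.sum_ite_eq, if_pos (Finset.mem_range.mpr hi)]

lemma F_rep_eval_top (m : ℕ) (c : ℕ → L) (d : L) :
    F m (rep m c d) (2*m+1) = d := by
  rw [F_rep]
  have h1 : (∑ j ∈ Finset.range (2*m+1), δ j (c j)) (2*m+1)
      = ∑ j ∈ Finset.range (2*m+1), (if (2*m+1) = j then c j else 0) := by
    rw [Finset.sum_apply]; rfl
  show (∑ j ∈ Finset.range (2*m+1), δ j (c j)) (2*m+1) + δ (2*m+1) d (2*m+1) = d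
  rw [h1, Finset.sum_ite_eq, if_neg (by simp), δ, if_pos rfl, zero_add]

lemma L_torsionfree (k : ℤ) (hk : k ≠ 0) (l : L) (hl : k • l = 0) : l = 0 := by
  ext n
  have h0 : (k • l) n = 0 := by rw [hl]; rfl
  rw [Finsupp.smul_apply, smul_eq_mul] at h0
  rcases mul_eq_zero.mp h0 with h | h
  · exact absurd h hk
  · simpa using h


end TorsionAux

/- Statement 13 (Proposition 4.6(iii), case `n = 2m`): an element of `A/J`
is additively torsion iff it lies in the ideal generated by the class of `ε`. -/
theorem torsion_eq_eps_ideal_even (m : ℕ) (hm : 1 ≤ m) (a : A ⧸ J m) :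
    (∃ k : ℤ, 1 ≤ k ∧ k • a = 0) ↔ a ∈ Ideal.span {Ideal.Quotient.mk (J m) ε} := by
  open TorsionAux in
  constructor
  · rintro ⟨k, hk1, hka⟩
    obtain ⟨p, hp⟩ := π_surj m a
    obtain ⟨q, c, d, hspan⟩ := spanning m hm p
    obtain ⟨q', hq'⟩ := π_surj m q
    have hπp0 : π m (X 0 * q' + rep m c d) = a := by
      rw [map_add, map_mul, hq', ← hspan, hp]
    have hker : π m (k • (X 0 * q' + rep m c d)) = 0 := by
      rw [map_zsmul, hπp0, hka]
    have hF : F m (k • (X 0 * q' + rep m c d)) = 0 := F_ker m hm _ hker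
    have hFp0 : k • F m (X 0 * q' + rep m c d) = 0 := by rw [← map_zsmul]; exact hF
    have hFX0 : F m (X 0 * q') = 0 := by
      rw [mul_comm]; exact FX0 m q'
    have hF0 : F m (X 0 * q' + rep m c d) = F m (rep m c d) := by
      rw [map_add, hFX0, zero_add]
    rw [hF0] at hFp0
    have hk0 : k ≠ 0 := by omega
    have hc : ∀ j ∈ Finset.range (2*m+1), c j = 0 := by
      intro j hj
      have hj' := Finset.mem_range.mp hj
      have h1 : k • (F m (rep m c d) j) = 0 := by
        have := congrFun hFp0 j
        simpa using this
      rw [F_rep_eval_lt m c d j hj'] at h1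
      exact L_torsionfree k hk0 _ h1
    have hd : d = 0 := by
      have h1 : k • (F m (rep m c d) (2*m+1)) = 0 := by
        have := congrFun hFp0 (2*m+1)
        simpa using this
      rw [F_rep_eval_top m c d] at h1
      exact L_torsionfree k hk0 _ h1
    have hrep0 : π m (rep m c d) = 0 := by
      rw [π_rep]
      rw [Finset.sum_eq_zero, hd, map_zero, map_zero, zero_mul (M₀ := A ⧸ J m), add_zero]
      intro j hj
      rw [hc j hj, map_zero, map_zero, zero_mul (M₀ := A ⧸ J m)]
    have ha : a = π m (X 0) * q := by
      rw [← hπp0, map_add, hrep0, add_zero, map_mul, hq']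
    refine Ideal.mem_span_singleton'.mpr ⟨q, ?_⟩
    rw [mul_comm (G := A ⧸ J m)]
    exact ha.symm
  · rintro hmem
    rw [Ideal.mem_span_singleton'] at hmem
    obtain ⟨b, hb⟩ := hmem
    refine ⟨2, by norm_num, ?_⟩
    have hεε : Ideal.Quotient.mk (J m) ε + Ideal.Quotient.mk (J m) ε = 0 := by
      have h0 : ε + ε = 0 := by
        rw [ε, ← map_add, ← two_mul]
        exact Ideal.Quotient.eq_zero_iff_mem.mpr
          (Ideal.subset_span (Set.mem_insert _ _))
      rw [← map_add, h0, map_zero]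
    have h2a : (2:ℤ) • a = b * (Ideal.Quotient.mk (J m) ε + Ideal.Quotient.mk (J m) ε) := by
      rw [← hb, two_smul]
      ring
    rw [h2a, hεε, mul_zero (M₀ := A ⧸ J m)]

end
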